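/- Let q be an odd prime power with q ≡ 2 (mod 3). The equation b^2 - ab + a^2 + a + 1 = -b in F_q has exactly one solution (a,b) with b ≠ 0, namely a = b = -1. -/

import Mathlib

lemma aux_not_isSquare_neg_three (F : Type) [Field F] [Fintype F]
    (h2 : (2 : F) ≠ 0) (h3 : (3 : F) ≠ 0)
    (hdvd : ¬ (3 ∣ Fintype.card F - 1)) : ¬ IsSquare (-3 : F) := by
  rintro ⟨s, hs⟩
  set ω : F := (s - 1) / 2 with hωdef
  have hω : ω ^ 2 + ω + 1 = 0 := by
    rw [hωdef]
    field_simp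
    linear_combination (-1 : F) * hs
  have hω3 : ω ^ 3 = 1 := by linear_combination (ω - 1) * hω
  have hω1 : ω ≠ 1 := by
    intro h
    apply h3
    rw [h] at hω
    linear_combination hω
  have hord : orderOf ω = 3 := orderOf_eq_prime hω3 hω1
  have hωne : ω ≠ 0 := by
    intro h
    rw [h] at hω
    simpa using hω
  have hpow : ω ^ (Fintype.card F - 1) = 1 :=
    FiniteField.pow_card_sub_one_eq_one ω hωne
  exact hdvd (hord ▸ orderOf_dvd_of_pow_eq_one hpow)

/-- For `q` an odd prime power with `q ≡ 2 (mod 3)`, the equation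
`b² - ab + a² + a + 1 = -b` in `F_q` has exactly one solution `(a,b)` with `b ≠ 0`,
namely `a = b = -1`. -/
theorem stmt9 (p n : ℕ) (hp : p.Prime) (hodd : Odd p) (hn : 0 < n)
    (F : Type) [Field F] [Fintype F] (hcard : Fintype.card F = p ^ n)
    (hmod : p ^ n % 3 = 2) (a b : F) :
    (b ≠ 0 ∧ b ^ 2 - a * b + a ^ 2 + a + 1 = -b) ↔ (a = -1 ∧ b = -1) := by
  -- basic char facts
  have hrne1 : ringChar F ≠ 1 := CharP.ringChar_ne_one
  have hcard2 : Fintype.card F % 2 = 1 := by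
    rw [hcard]
    have : p % 2 = 1 := Nat.odd_iff.mp hodd
    exact Nat.odd_iff.mp (hodd.pow)
  have hr2 : ringChar F ≠ 2 := by
    intro h
    have := FiniteField.even_card_of_char_two h
    omega
  have h2 : (2 : F) ≠ 0 := by
    intro h
    have hd : ringChar F ∣ 2 := (ringChar.spec F 2).mp (by exact_mod_cast h)
    rcases Nat.Prime.eq_one_or_self_of_dvd Nat.prime_two _ hd with h' | h'
    · exact hrne1 h'
    · exact hr2 h'
  have h3 : (3 : F) ≠ 0 := by
    intro h
    have hd : ringChar F ∣ 3 := (ringChar.spec F 3).mp (by exact_mod_cast h)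
    have hr3 : ringChar F = 3 := by
      rcases (Nat.Prime.eq_one_or_self_of_dvd (by norm_num) _ hd) with h' | h'
      · exact absurd h' hrne1
      · exact h'
    have hdc : ringChar F ∣ Fintype.card F := by
      have := FiniteField.cast_card_eq_zero F
      exact (ringChar.spec F _).mp this
    rw [hr3, hcard] at hdc
    omega
  have hdvd : ¬ (3 ∣ Fintype.card F - 1) := by
    rw [hcard]
    have h1 : 2 ≤ p ^ n := by omega
    omega
  have hns := aux_not_isSquare_neg_three F h2 h3 hdvd
  constructor
  · rintro ⟨hb, h⟩
    have ha : a = -1 := by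
      by_contra hne
      have h1 : a + 1 ≠ 0 := by
        intro h'
        exact hne (by linear_combination h')
      apply hns
      refine ⟨(2 * b + 1 - a) / (a + 1), ?_⟩
      field_simp
      linear_combination (-4 : F) * h
    subst ha
    have hb1 : (b + 1) ^ 2 = 0 := by linear_combination h
    have : b + 1 = 0 := by
      exact pow_eq_zero_iff (by norm_num) |>.mp hb1
    constructor
    · rfl
    · linear_combination this
  · rintro ⟨rfl, rfl⟩
    refine ⟨by simp, by ring⟩
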